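/- Norm bound for the transmutation operator: under the hypotheses of the kernel estimate, the operator T u(x) = u(x) + ∫_{-x}^x K(x,t;h) u(t) dt on C[-b,b] satisfies ‖T‖ ≤ 1 + b(|h| I₀(b√c) + 2√c I₁(b√c)), where c = max_{[-b,b]} |q|, using the pointwise bound |K(x,t;h)| ≤ (|h|/2) I₀(√(c|x²-t²|)) + (1/2)√(c|x²-t²|) I₁(√(c|x²-t²|))/|x−t| and the monotonicity of I₁(x)/x. -/

import Mathlib

/-- Modified Bessel function of the first kind `I₀`. -/
noncomputable def besselI0 (x : ℝ) : ℝ := ∑' k : ℕ, (x / 2) ^ (2 * k) / ((k.factorial : ℝ)) ^ 2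

/-- Modified Bessel function of the first kind `I₁`. -/
noncomputable def besselI1 (x : ℝ) : ℝ :=
  ∑' k : ℕ, (x / 2) ^ (2 * k + 1) / ((k.factorial : ℝ) * ((k + 1).factorial : ℝ))

lemma summable_I0 (x : ℝ) :
    Summable (fun k : ℕ => (x / 2) ^ (2 * k) / ((k.factorial : ℝ)) ^ 2) := by
  apply Summable.of_norm_bounded (g := fun k : ℕ => (|x| / 2) ^ (2 * k) / (k.factorial : ℝ))
  · have : Summable (fun k : ℕ => ((|x| / 2) ^ 2) ^ k / (k.factorial : ℝ)) :=
      Real.summable_pow_div_factorial _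
    simpa [pow_mul] using this
  · intro k
    have hk1 : (1 : ℝ) ≤ (k.factorial : ℝ) := by exact_mod_cast k.factorial_pos
    have hknum : (0:ℝ) < (k.factorial : ℝ) := by positivity
    rw [Real.norm_eq_abs, abs_div, abs_pow, abs_div, abs_two, abs_pow, abs_of_pos hknum]
    apply div_le_div_of_nonneg_left (by positivity) hknum
    calc (k.factorial : ℝ) = 1 * (k.factorial : ℝ) := by ring
      _ ≤ (k.factorial : ℝ) * (k.factorial : ℝ) :=
        mul_le_mul_of_nonneg_right hk1 (by positivity)
      _ = (k.factorial : ℝ) ^ 2 := by ring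

lemma summable_I1 (x : ℝ) :
    Summable (fun k : ℕ =>
      (x / 2) ^ (2 * k + 1) / ((k.factorial : ℝ) * ((k + 1).factorial : ℝ))) := by
  apply Summable.of_norm_bounded
    (g := fun k : ℕ => (|x| / 2) * ((|x| / 2) ^ 2) ^ k / (k.factorial : ℝ))
  · have : Summable (fun k : ℕ => ((|x| / 2) ^ 2) ^ k / (k.factorial : ℝ)) :=
      Real.summable_pow_div_factorial _
    have := this.mul_left (|x| / 2)
    simpa [mul_div_assoc] using this
  · intro k
    have hk1 : (1 : ℝ) ≤ ((k + 1).factorial : ℝ) := by exact_mod_cast (k + 1).factorial_pos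
    have hknum : (0:ℝ) < (k.factorial : ℝ) := by exact_mod_cast k.factorial_pos
    have hk2 : (0:ℝ) < ((k + 1).factorial : ℝ) := by exact_mod_cast (k + 1).factorial_pos
    rw [Real.norm_eq_abs, abs_div, abs_pow, abs_div, abs_two, abs_mul, Nat.abs_cast,
      Nat.abs_cast]
    have hnum : (|x| / 2) ^ (2 * k + 1) = (|x| / 2) * ((|x| / 2) ^ 2) ^ k := by
      rw [pow_succ, pow_mul]; ring
    rw [hnum]
    apply div_le_div_of_nonneg_left (by positivity) hknum
    calc (k.factorial : ℝ) = (k.factorial : ℝ) * 1 := by ring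
      _ ≤ (k.factorial : ℝ) * ((k + 1).factorial : ℝ) :=
        mul_le_mul_of_nonneg_left hk1 (by positivity)

lemma besselI0_nonneg (x : ℝ) : 0 ≤ besselI0 x := by
  apply tsum_nonneg
  intro k
  have : (0:ℝ) ≤ (x / 2) ^ (2 * k) := by rw [pow_mul]; positivity
  positivity

lemma besselI1_nonneg {x : ℝ} (hx : 0 ≤ x) : 0 ≤ besselI1 x := by
  apply tsum_nonneg
  intro k
  positivity

lemma besselI0_mono {a b : ℝ} (ha : 0 ≤ a) (hab : a ≤ b) : besselI0 a ≤ besselI0 b := by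
  apply Summable.tsum_le_tsum _ (summable_I0 a) (summable_I0 b)
  intro k
  apply div_le_div_of_nonneg_right _ (by positivity)
  exact pow_le_pow_left₀ (by positivity) (by linarith) _

lemma sqrt_arg_le (b c x t : ℝ) (hb : 0 < b) (hc : 0 ≤ c) (hx : |x| ≤ b) (ht : |t| ≤ b) :
    Real.sqrt (c * |x ^ 2 - t ^ 2|) ≤ b * Real.sqrt c := by
  have hx2 : x ^ 2 ≤ b ^ 2 := by
    have := sq_abs x; nlinarith [abs_nonneg x]
  have ht2 : t ^ 2 ≤ b ^ 2 := by
    have := sq_abs t; nlinarith [abs_nonneg t]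
  have habs : |x ^ 2 - t ^ 2| ≤ b ^ 2 := by
    rw [abs_sub_le_iff]; constructor <;> nlinarith [sq_nonneg x, sq_nonneg t]
  have h1 : c * |x ^ 2 - t ^ 2| ≤ b ^ 2 * c := by nlinarith [abs_nonneg (x ^ 2 - t ^ 2)]
  calc Real.sqrt (c * |x ^ 2 - t ^ 2|) ≤ Real.sqrt (b ^ 2 * c) := Real.sqrt_le_sqrt h1
    _ = b * Real.sqrt c := by
        rw [Real.sqrt_mul (by positivity), Real.sqrt_sq hb.le]

lemma key_I1 (b c x t : ℝ) (hb : 0 < b) (hc : 0 ≤ c) (hx : |x| ≤ b) (ht : |t| ≤ b)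
    (hxt : x ≠ t) :
    Real.sqrt (c * |x ^ 2 - t ^ 2|) * besselI1 (Real.sqrt (c * |x ^ 2 - t ^ 2|)) / |x - t|
      ≤ 2 * Real.sqrt c * besselI1 (b * Real.sqrt c) := by
  set s := Real.sqrt (c * |x ^ 2 - t ^ 2|) with hs
  have hd : 0 < |x - t| := abs_pos.mpr (sub_ne_zero.mpr hxt)
  have hs2 : s ^ 2 = c * |x ^ 2 - t ^ 2| := Real.sq_sqrt (by positivity)
  have habs : |x ^ 2 - t ^ 2| ≤ b ^ 2 := by
    have hx2 : x ^ 2 ≤ b ^ 2 := by have := sq_abs x; nlinarith [abs_nonneg x]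
    have ht2 : t ^ 2 ≤ b ^ 2 := by have := sq_abs t; nlinarith [abs_nonneg t]
    rw [abs_sub_le_iff]; constructor <;> nlinarith [sq_nonneg x, sq_nonneg t]
  have hsum : |x + t| ≤ 2 * b := by
    calc |x + t| ≤ |x| + |t| := abs_add_le _ _
      _ ≤ 2 * b := by linarith
  have hfac : |x ^ 2 - t ^ 2| = |x - t| * |x + t| := by
    rw [← abs_mul]; ring_nf
  rw [besselI1, besselI1, ← tsum_mul_left, ← tsum_div_const, ← tsum_mul_left]
  apply Summable.tsum_le_tsum _ (((summable_I1 s).mul_left s).div_const _)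
    ((summable_I1 (b * Real.sqrt c)).mul_left (2 * Real.sqrt c))
  intro k
  set A : ℝ := (k.factorial : ℝ) * ((k + 1).factorial : ℝ) with hA
  have hApos : 0 < A := by
    have h1 : (0:ℝ) < (k.factorial : ℝ) := by exact_mod_cast k.factorial_pos
    have h2 : (0:ℝ) < ((k + 1).factorial : ℝ) := by exact_mod_cast (k + 1).factorial_pos
    positivity
  have e1 : s * ((s / 2) ^ (2 * k + 1) / A) / |x - t|
      = (s ^ 2) ^ (k + 1) / (2 ^ (2 * k + 1) * A * |x - t|) := by
    rw [div_pow]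
    field_simp
    ring
  have hq2 : Real.sqrt c ^ 2 = c := Real.sq_sqrt hc
  have e2 : 2 * Real.sqrt c * ((b * Real.sqrt c / 2) ^ (2 * k + 1) / A)
      = 2 * b ^ (2 * k + 1) * c ^ (k + 1) / (2 ^ (2 * k + 1) * A) := by
    rw [div_pow]
    field_simp
    conv_rhs => rw [← hq2]
    rw [mul_pow, ← pow_mul]
    ring
  rw [e1, e2, hs2]
  have key : (c * |x ^ 2 - t ^ 2|) ^ (k + 1) ≤ 2 * b ^ (2 * k + 1) * c ^ (k + 1) * |x - t| := by
    have step : |x ^ 2 - t ^ 2| ^ (k + 1) ≤ 2 * b ^ (2 * k + 1) * |x - t| := by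
      calc |x ^ 2 - t ^ 2| ^ (k + 1)
          = |x ^ 2 - t ^ 2| ^ k * |x ^ 2 - t ^ 2| := pow_succ _ _
        _ ≤ (b ^ 2) ^ k * (|x - t| * (2 * b)) := by
            apply mul_le_mul (pow_le_pow_left₀ (abs_nonneg _) habs k)
            · rw [hfac]
              exact mul_le_mul_of_nonneg_left hsum (abs_nonneg _)
            · exact abs_nonneg _
            · positivity
        _ = 2 * b ^ (2 * k + 1) * |x - t| := by rw [← pow_mul]; ring
    calc (c * |x ^ 2 - t ^ 2|) ^ (k + 1)
        = c ^ (k + 1) * |x ^ 2 - t ^ 2| ^ (k + 1) := mul_pow _ _ _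
      _ ≤ c ^ (k + 1) * (2 * b ^ (2 * k + 1) * |x - t|) :=
          mul_le_mul_of_nonneg_left step (by positivity)
      _ = 2 * b ^ (2 * k + 1) * c ^ (k + 1) * |x - t| := by ring
  rw [div_le_div_iff₀ (by positivity) (by positivity)]
  calc (c * |x ^ 2 - t ^ 2|) ^ (k + 1) * (2 ^ (2 * k + 1) * A)
      ≤ (2 * b ^ (2 * k + 1) * c ^ (k + 1) * |x - t|) * (2 ^ (2 * k + 1) * A) :=
        mul_le_mul_of_nonneg_right key (by positivity)
    _ = 2 * b ^ (2 * k + 1) * c ^ (k + 1) * (2 ^ (2 * k + 1) * A * |x - t|) := by ring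

/-- Norm bound for the transmutation operator
`T u (x) = u x + ∫_{-x}^x K(x,t) u(t) dt` on `C[-b,b]`:
from the pointwise kernel estimate one gets
`‖T‖ ≤ 1 + b(|h| I₀(b√c) + 2√c I₁(b√c))`. -/
theorem stmt_17 (b c : ℝ) (hb : 0 < b) (hc : 0 ≤ c) (h : ℂ) (K : ℝ → ℝ → ℂ)
    (hKcont : ContinuousOn (fun p : ℝ × ℝ => K p.1 p.2)
      (Set.Icc (-b) b ×ˢ Set.Icc (-b) b))
    (hK : ∀ x t : ℝ, |x| ≤ b → |t| ≤ b → x ≠ t →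
      ‖K x t‖ ≤
        (‖h‖ / 2) * besselI0 (Real.sqrt (c * |x ^ 2 - t ^ 2|)) +
        (1 / 2) * Real.sqrt (c * |x ^ 2 - t ^ 2|) *
          besselI1 (Real.sqrt (c * |x ^ 2 - t ^ 2|)) / |x - t|) :
    ∀ u : ℝ → ℂ, Continuous u → ∀ M : ℝ,
      (∀ t ∈ Set.Icc (-b) b, ‖u t‖ ≤ M) →
      ∀ x ∈ Set.Icc (-b) b,
        ‖u x + ∫ t in (-x)..x, K x t * u t‖ ≤
          (1 + b * (‖h‖ * besselI0 (b * Real.sqrt c) +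
            2 * Real.sqrt c * besselI1 (b * Real.sqrt c))) * M := by
  intro u hu M hM x hx
  have hx' : |x| ≤ b := abs_le.mpr ⟨hx.1, hx.2⟩
  have hM0 : 0 ≤ M :=
    le_trans (norm_nonneg _) (hM 0 ⟨by linarith, by linarith⟩)
  set C : ℝ := ‖h‖ / 2 * besselI0 (b * Real.sqrt c)
      + Real.sqrt c * besselI1 (b * Real.sqrt c) with hCdef
  have hbc : 0 ≤ b * Real.sqrt c := by positivity
  have hC0 : 0 ≤ C := by
    apply add_nonneg
    · exact mul_nonneg (by positivity) (besselI0_nonneg _)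
    · exact mul_nonneg (Real.sqrt_nonneg c) (besselI1_nonneg hbc)
  -- bound on the integral
  have haex : ∀ᵐ t : ℝ, t ≠ x := by
    have : MeasureTheory.volume ({x} : Set ℝ) = 0 := Real.volume_singleton
    exact MeasureTheory.compl_mem_ae_iff.mpr this
  have hint : ‖∫ t in (-x)..x, K x t * u t‖ ≤ C * M * |x - (-x)| := by
    apply intervalIntegral.norm_integral_le_of_norm_le_const_ae
    filter_upwards [haex] with t htx hmem
    have ht' : |t| ≤ b := by
      have hxb := abs_le.mp hx'
      rcases Set.mem_uIoc.mp hmem with ⟨h1, h2⟩ | ⟨h1, h2⟩ <;>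
        exact abs_le.mpr ⟨by linarith, by linarith⟩
    have hKb : ‖K x t‖ ≤ C := by
      have h1 := hK x t hx' ht' (Ne.symm htx)
      have h2 : besselI0 (Real.sqrt (c * |x ^ 2 - t ^ 2|)) ≤ besselI0 (b * Real.sqrt c) :=
        besselI0_mono (Real.sqrt_nonneg _) (sqrt_arg_le b c x t hb hc hx' ht')
      have h3 := key_I1 b c x t hb hc hx' ht' (Ne.symm htx)
      have h4 : (1 / 2) * Real.sqrt (c * |x ^ 2 - t ^ 2|) *
          besselI1 (Real.sqrt (c * |x ^ 2 - t ^ 2|)) / |x - t|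
          ≤ Real.sqrt c * besselI1 (b * Real.sqrt c) := by
        have : (1 / 2) * Real.sqrt (c * |x ^ 2 - t ^ 2|) *
            besselI1 (Real.sqrt (c * |x ^ 2 - t ^ 2|)) / |x - t|
            = (1 / 2) * (Real.sqrt (c * |x ^ 2 - t ^ 2|) *
              besselI1 (Real.sqrt (c * |x ^ 2 - t ^ 2|)) / |x - t|) := by ring
        rw [this]
        linarith
      have h5 : ‖h‖ / 2 * besselI0 (Real.sqrt (c * |x ^ 2 - t ^ 2|))
          ≤ ‖h‖ / 2 * besselI0 (b * Real.sqrt c) :=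
        mul_le_mul_of_nonneg_left h2 (by positivity)
      calc ‖K x t‖ ≤ _ := h1
        _ ≤ C := by rw [hCdef]; linarith
    have hub : ‖u t‖ ≤ M := hM t ⟨by linarith [(abs_le.mp ht').1],
      (abs_le.mp ht').2⟩
    calc ‖K x t * u t‖ = ‖K x t‖ * ‖u t‖ := by
          rw [norm_mul]
      _ ≤ C * M := mul_le_mul hKb hub (norm_nonneg _) hC0
  have habs2x : |x - (-x)| ≤ 2 * b := by
    rw [sub_neg_eq_add]
    calc |x + x| ≤ |x| + |x| := abs_add_le _ _
      _ ≤ 2 * b := by linarith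
  have hint2 : ‖∫ t in (-x)..x, K x t * u t‖ ≤ C * M * (2 * b) :=
    le_trans hint (mul_le_mul_of_nonneg_left habs2x (by positivity))
  calc ‖u x + ∫ t in (-x)..x, K x t * u t‖
      ≤ ‖u x‖ + ‖∫ t in (-x)..x, K x t * u t‖ :=
        norm_add_le _ _
    _ ≤ M + C * M * (2 * b) := by
        apply add_le_add (hM x hx)
        exact hint2
    _ = (1 + b * (‖h‖ * besselI0 (b * Real.sqrt c) +
          2 * Real.sqrt c * besselI1 (b * Real.sqrt c))) * M := by
        rw [hCdef]; ring
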